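/- In an update flow network, if for a flow pair P = (F^o, F^u) the paths F^o and F^u share only the vertices s and t, then for every set U of resolved updates for which P is transient, the transient flow T_{P,U} is either exactly F^o or exactly F^u; moreover T_{P,U} = F^u if and only if (s, P) ∈ U and all updates (v, P) for internal vertices v of F^u are in U. -/

import Mathlib

/-!
A formal model of congestion-free flow rerouting (network update scheduling).
An update flow network consists of a source `s`, a terminal `t`, edge
capacities, and `k` update flow pairs, each given by an old `s`-`t` path and
an update (new) `s`-`t` path (represented as lists of vertices) with a demand.
An update sequence assigns to every update `(v, i)` (vertex `v`, pair `i`) a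
round; it is feasible if resolving all updates of earlier rounds together with
any subset of the current round always leaves, for every pair, a unique valid
(capacity-respecting) transient `s`-`t` path among the active edges, and the
family of transient paths jointly respects the capacities.
-/

namespace FlowUpdate

variable {V : Type} [DecidableEq V] {k : ℕ}

/-- The edges of a path given as a list of vertices. -/
def edgesOf (p : List V) : List (V × V) := p.zip p.tail

/-- The subpath of `p` from vertex `a` to vertex `z` (inclusive). -/
def segment (p : List V) (a z : V) : List V :=
  ((p.dropWhile (fun v => decide (v ≠ a))).takeWhile (fun v => decide (v ≠ z))) ++ [z]

/-- The outgoing edge of `v` on the path `p`, if any. -/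
def outEdge (p : List V) (v : V) : Option (V × V) :=
  (edgesOf p).find? (fun e => decide (e.1 = v))

/-- An update flow network with `k` update flow pairs. -/
structure UFN (V : Type) (k : ℕ) where
  s : V
  t : V
  cap : V → V → ℕ
  old : Fin k → List V
  new : Fin k → List V
  demand : Fin k → ℕ

namespace UFN

/-- After resolving the set of updates `U`, edge `e` is active for pair `i` iff
it is an old edge whose tail is not yet updated, or a new edge whose tail is
updated. -/
def active (G : UFN V k) (U : Set (V × Fin k)) (i : Fin k) (e : V × V) : Prop :=
  (e ∈ edgesOf (G.old i) ∧ (e.1, i) ∉ U) ∨ (e ∈ edgesOf (G.new i) ∧ (e.1, i) ∈ U)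

/-- `p` is a simple `s`-`t` path all of whose edges satisfy `E`. -/
def IsPathIn (E : V × V → Prop) (s t : V) (p : List V) : Prop :=
  p.head? = some s ∧ p.getLast? = some t ∧ List.Chain' (fun u v => E (u, v)) p ∧ p.Nodup

/-- `p` respects the capacities for the demand of pair `i`. -/
def ValidPath (G : UFN V k) (i : Fin k) (p : List V) : Prop :=
  ∀ e ∈ edgesOf p, G.demand i ≤ G.cap e.1 e.2

/-- `T` is the unique valid transient path of pair `i` after resolving `U`. -/
def TransientPair (G : UFN V k) (U : Set (V × Fin k)) (i : Fin k) (T : List V) : Prop :=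
  IsPathIn (G.active U i) G.s G.t T ∧ G.ValidPath i T ∧
    ∀ p, IsPathIn (G.active U i) G.s G.t p → G.ValidPath i p → p = T

/-- After resolving `U`, every pair has a unique valid transient path, and the
family of transient paths jointly respects the capacities. -/
def TransientFamily (G : UFN V k) (U : Set (V × Fin k)) : Prop :=
  ∃ T : Fin k → List V,
    (∀ i, G.TransientPair U i (T i)) ∧
    (∀ u v : V, (∑ i : Fin k, if (u, v) ∈ edgesOf (T i) then G.demand i else 0) ≤ G.cap u v)

/-- An update sequence (an assignment of rounds to all updates) is feasible if
after resolving all updates of rounds `< r` together with any subset of the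
updates of round `r`, all pairs admit a transient family. -/
def Feasible (G : UFN V k) (R : V × Fin k → ℕ) : Prop :=
  ∀ r : ℕ, ∀ S : Set (V × Fin k), (∀ u ∈ S, R u = r) →
    G.TransientFamily ({u | R u < r} ∪ S)

/-- `p` is a simple path from the source to the terminal. -/
def IsStPath (G : UFN V k) (p : List V) : Prop :=
  p.head? = some G.s ∧ p.getLast? = some G.t ∧ p.Nodup

/-- Well-formedness of an update flow network: all old and new flows are simple
`s`-`t` paths, each pair forms a DAG, each new path respects capacities for its
own demand, and both the old family and the new family jointly respect the
capacities. -/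
def WellFormed (G : UFN V k) : Prop :=
  (∀ i, G.IsStPath (G.old i) ∧ G.IsStPath (G.new i)) ∧
  (∀ i, ∃ ord : V → ℕ, ∀ e ∈ edgesOf (G.old i) ++ edgesOf (G.new i), ord e.1 < ord e.2) ∧
  (∀ i, G.ValidPath i (G.new i)) ∧
  (∀ u v : V, (∑ i : Fin k, if (u, v) ∈ edgesOf (G.old i) then G.demand i else 0) ≤ G.cap u v) ∧
  (∀ u v : V, (∑ i : Fin k, if (u, v) ∈ edgesOf (G.new i) then G.demand i else 0) ≤ G.cap u v)

/-- The common vertices of the old and new path of pair `i`, in path order. -/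
def commons (G : UFN V k) (i : Fin k) : List V :=
  (G.old i).filter (fun v => decide (v ∈ G.new i))

/-- A block of pair `i` is a pair `(a, z)` of consecutive common vertices of the
old and new paths of `i`. -/
def IsBlock (G : UFN V k) (i : Fin k) (b : V × V) : Prop :=
  b ∈ edgesOf (G.commons i)

/-- A (candidate) block: a pair index together with its start and end vertices. -/
abbrev Blk (V : Type) (k : ℕ) := Fin k × V × V

def IsBlk (G : UFN V k) (b : Blk V k) : Prop := G.IsBlock b.1 b.2

/-- The old-path segment of a block. -/
def blkOldSeg (G : UFN V k) (b : Blk V k) : List V := segment (G.old b.1) b.2.1 b.2.2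

/-- The update-path segment of a block. -/
def blkNewSeg (G : UFN V k) (b : Blk V k) : List V := segment (G.new b.1) b.2.1 b.2.2

/-- Block `b1` depends on block `b2` (written `b1 → b2`) if they belong to
different pairs and some edge lies on `b1`'s update path and on `b2`'s old path
with capacity less than the sum of the two demands. -/
def Dep (G : UFN V k) (b1 b2 : Blk V k) : Prop :=
  G.IsBlk b1 ∧ G.IsBlk b2 ∧ b1.1 ≠ b2.1 ∧
  ∃ e : V × V, e ∈ edgesOf (G.blkNewSeg b1) ∧ e ∈ edgesOf (G.blkOldSeg b2) ∧
    G.cap e.1 e.2 < G.demand b1.1 + G.demand b2.1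

/-- The dependency graph contains a directed cycle. -/
def HasDepCycle (G : UFN V k) : Prop := ∃ b : Blk V k, Relation.TransGen G.Dep b b

/-- The number of rounds used by an update sequence. -/
def numRounds [Fintype V] (R : V × Fin k → ℕ) : ℕ :=
  (Finset.image R Finset.univ).card

/-- An update `(v, i)` is empty if `v`'s outgoing old edge and outgoing new edge
for pair `i` coincide (in particular if `v` has no outgoing edge for pair `i`). -/
def EmptyUpd (G : UFN V k) (u : V × Fin k) : Prop :=
  outEdge (G.old u.2) u.1 = outEdge (G.new u.2) u.1

instance (G : UFN V k) (u : V × Fin k) : Decidable (G.EmptyUpd u) :=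
  inferInstanceAs (Decidable (outEdge (G.old u.2) u.1 = outEdge (G.new u.2) u.1))

/-- `R` updates every block in (at most) 3 consecutive rounds: first all internal
update-path vertices of the block, then the start vertex, then all old-path-only
vertices of the block. -/
def BlockPattern (G : UFN V k) (R : V × Fin k → ℕ) : Prop :=
  ∀ b : Blk V k, G.IsBlk b → ∃ r : ℕ,
    (∀ v ∈ G.blkNewSeg b, v ≠ b.2.1 → v ≠ b.2.2 → R (v, b.1) = r) ∧
    R (b.2.1, b.1) = r + 1 ∧
    (∀ v ∈ G.blkOldSeg b, v ∉ G.new b.1 → R (v, b.1) = r + 2)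

/-- The size of the network (total length of the flow paths). -/
def size (G : UFN V k) : ℕ := ∑ i : Fin k, ((G.old i).length + (G.new i).length)

end UFN

end FlowUpdate

section Aux

open FlowUpdate

set_option linter.unusedSectionVars false

variable {V : Type} [DecidableEq V]

lemma edgesOf_cons_cons (a b : V) (l : List V) :
    edgesOf (a :: b :: l) = (a, b) :: edgesOf (b :: l) := rfl

lemma edgesOf_single (a : V) : edgesOf [a] = [] := rfl

lemma mem_of_mem_edgesOf {p : List V} {u w : V} (h : (u, w) ∈ edgesOf p) :
    u ∈ p ∧ w ∈ p := by
  have := List.of_mem_zip h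
  exact ⟨this.1, List.mem_of_mem_tail this.2⟩

lemma not_out_last {p : List V} {t w : V} (hnd : p.Nodup)
    (hl : p.getLast? = some t) : (t, w) ∉ edgesOf p := by
  induction p with
  | nil => simp [edgesOf]
  | cons a l ih =>
    cases l with
    | nil => simp [edgesOf]
    | cons b l' =>
      rw [List.getLast?_cons_cons] at hl
      rw [edgesOf_cons_cons]
      intro h
      rcases List.mem_cons.mp h with h | h
      · have ht : t ∈ b :: l' := List.mem_of_getLast? hl
        have : t = a := congrArg Prod.fst h
        exact (List.nodup_cons.mp hnd).1 (this ▸ ht)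
      · exact ih (List.nodup_cons.mp hnd).2 hl h

lemma exists_out {p : List V} {t v : V} (hl : p.getLast? = some t)
    (hv : v ∈ p) (hvt : v ≠ t) : ∃ w, (v, w) ∈ edgesOf p := by
  induction p with
  | nil => cases hv
  | cons a l ih =>
    cases l with
    | nil =>
      simp only [List.mem_singleton] at hv
      simp only [List.getLast?_singleton, Option.some.injEq] at hl
      exact absurd (hv.trans hl) hvt
    | cons b l' =>
      rw [List.getLast?_cons_cons] at hl
      rcases List.mem_cons.mp hv with rfl | hv
      · exact ⟨b, List.mem_cons_self⟩
      · obtain ⟨w, hw⟩ := ih hl hv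
        exact ⟨w, List.mem_cons_of_mem _ hw⟩

lemma first_edge {a w : V} {l : List V} (ha : a ∉ l)
    (h : (a, w) ∈ edgesOf (a :: l)) : l.head? = some w := by
  cases l with
  | nil => simp [edgesOf] at h
  | cons b l' =>
    rw [edgesOf_cons_cons] at h
    rcases List.mem_cons.mp h with h | h
    · have : w = b := congrArg Prod.snd h
      rw [this, List.head?_cons]
    · exact absurd (mem_of_mem_edgesOf h).1 ha

lemma eq_nil_of_getLast?_head {a : V} {l : List V} (hnd : (a :: l).Nodup)
    (hl : (a :: l).getLast? = some a) : l = [] := by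
  cases l with
  | nil => rfl
  | cons b l' =>
    rw [List.getLast?_cons_cons] at hl
    exact absurd (List.mem_of_getLast? hl) (List.nodup_cons.mp hnd).1

lemma eq_single {p : List V} {s : V} (hnd : p.Nodup) (hh : p.head? = some s)
    (hl : p.getLast? = some s) : p = [s] := by
  cases p with
  | nil => simp at hh
  | cons a l =>
    obtain rfl : a = s := by simpa using hh
    rw [eq_nil_of_getLast?_head hnd hl]

lemma eq_pair {p : List V} {s t : V} (hnd : p.Nodup) (hh : p.head? = some s)
    (hl : p.getLast? = some t) (he : (s, t) ∈ edgesOf p) : p = [s, t] := by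
  cases p with
  | nil => simp at hh
  | cons a l =>
    obtain rfl : a = s := by simpa using hh
    have h1 : l.head? = some t := first_edge (List.nodup_cons.mp hnd).1 he
    cases l with
    | nil => simp at h1
    | cons b l' =>
      obtain rfl : b = t := by simpa using h1
      rw [List.getLast?_cons_cons] at hl
      rw [eq_nil_of_getLast?_head (List.nodup_cons.mp hnd).2 hl]

lemma chain'_iff_edges {R : V → V → Prop} {p : List V} :
    List.Chain' R p ↔ ∀ e ∈ edgesOf p, R e.1 e.2 := by
  induction p with
  | nil => simp [edgesOf, List.Chain', List.isChain_nil]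
  | cons a l ih =>
    cases l with
    | nil => simp [edgesOf, List.Chain', List.isChain_singleton]
    | cons b l' =>
      unfold List.Chain' at ih ⊢
      rw [List.isChain_cons_cons, edgesOf_cons_cons, ih]
      constructor
      · rintro ⟨h1, h2⟩ e he
        rcases List.mem_cons.mp he with rfl | he
        · exact h1
        · exact h2 e he
      · intro h
        exact ⟨h (a, b) (List.mem_cons_self),
          fun e he => h e (List.mem_cons_of_mem _ he)⟩

lemma chain_in {P : List V} {s : V} {good : V → V → Prop}
    (hgood : ∀ u w, good u w → u ≠ s → u ∈ P → (u, w) ∈ edgesOf P) :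
    ∀ q : List V, List.Chain' good q → (∀ u ∈ q, u ≠ s) →
      (∀ x, q.head? = some x → x ∈ P) → ∀ e ∈ edgesOf q, e ∈ edgesOf P := by
  intro q
  induction q with
  | nil => intro _ _ _ e he; simp [edgesOf] at he
  | cons a l ih =>
    cases l with
    | nil => intro _ _ _ e he; simp [edgesOf] at he
    | cons b l' =>
      intro hch hns hhd e he
      have hab : good a b := (List.isChain_cons_cons.mp hch).1
      have haP : a ∈ P := hhd a rfl
      have hedge : (a, b) ∈ edgesOf P :=
        hgood a b hab (hns a (List.mem_cons_self)) haP
      rw [edgesOf_cons_cons] at he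
      rcases List.mem_cons.mp he with rfl | he
      · exact hedge
      · refine ih (List.isChain_cons_cons.mp hch).2
          (fun u hu => hns u (List.mem_cons_of_mem _ hu)) ?_ e he
        intro x hx
        obtain rfl : b = x := by simpa using hx
        exact (mem_of_mem_edgesOf hedge).2

lemma follow : ∀ (q p : List V), p.Nodup → q.Nodup → q.head? = p.head? →
    q.getLast? = p.getLast? → (∀ e ∈ edgesOf q, e ∈ edgesOf p) → q = p := by
  intro q
  induction q with
  | nil =>
    intro p _ _ hh _ _
    cases p with
    | nil => rfl
    | cons a l => simp at hh
  | cons a l ih =>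
    intro p hp hq hh hl hc
    cases p with
    | nil => simp at hh
    | cons a' p' =>
      obtain rfl : a = a' := by simpa using hh
      cases l with
      | nil =>
        have hl' : (a :: p').getLast? = some a := by
          rw [← hl]; rfl
        rw [eq_nil_of_getLast?_head hp hl']
      | cons b l' =>
        have he : (a, b) ∈ edgesOf (a :: p') :=
          hc (a, b) (List.mem_cons_self)
        have hfe : p'.head? = some b := first_edge (List.nodup_cons.mp hp).1 he
        cases p' with
        | nil => simp at hfe
        | cons b' p'' =>
          have hbe : b = b' := (show b' = b by simpa using hfe).symm
          subst hbe
          have hkey : b :: l' = b :: p'' := by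
            refine ih (b :: p'') (List.nodup_cons.mp hp).2
              (List.nodup_cons.mp hq).2 rfl ?_ ?_
            · rw [List.getLast?_cons_cons] at hl
              rw [List.getLast?_cons_cons] at hl
              exact hl
            · intro e he'
              have heP := hc e (List.mem_cons_of_mem _ he')
              rw [edgesOf_cons_cons] at heP
              rcases List.mem_cons.mp heP with h | h
              · exfalso
                obtain ⟨u, w⟩ := e
                have hu : u ∈ b :: l' := (mem_of_mem_edgesOf he').1
                have : u = a := congrArg Prod.fst h
                exact (List.nodup_cons.mp hq).1 (this ▸ hu)
              · exact h
          rw [hkey]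

end Aux

open FlowUpdate in
/-- If the old and update paths of a flow pair share only the
vertices `s` and `t` (and are distinct), then any transient flow of the pair is
either exactly the old path or exactly the new path; and it is the new path if
and only if `s` and all internal vertices of the new path have been updated. -/
theorem stmt18 {V : Type} [DecidableEq V] {k : ℕ} (G : UFN V k)
    (hWF : G.WellFormed) (i : Fin k)
    (hdisj : ∀ v, v ∈ G.old i → v ∈ G.new i → v = G.s ∨ v = G.t)
    (hne : G.old i ≠ G.new i)
    (U : Set (V × Fin k)) (T : List V) (hT : G.TransientPair U i T) :
    (T = G.old i ∨ T = G.new i) ∧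
    (T = G.new i ↔
      ((G.s, i) ∈ U ∧ ∀ v ∈ G.new i, v ≠ G.s → v ≠ G.t → (v, i) ∈ U)) := by
  obtain ⟨⟨hOh, hOl, hOnd⟩, ⟨hNh, hNl, hNnd⟩⟩ := hWF.1 i
  obtain ⟨⟨hTh, hTl, hTch, hTnd⟩, hTval, hTuniq⟩ := hT
  have hgoodO : ∀ u w, G.active U i (u, w) → u ≠ G.s → u ∈ G.old i →
      (u, w) ∈ edgesOf (G.old i) := by
    intro u w hact hus huO
    rcases hact with ⟨h, _⟩ | ⟨h, _⟩
    · exact h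
    · exfalso
      have huN : u ∈ G.new i := (mem_of_mem_edgesOf h).1
      rcases hdisj u huO huN with rfl | rfl
      · exact hus rfl
      · exact not_out_last hNnd hNl h
  have hgoodN : ∀ u w, G.active U i (u, w) → u ≠ G.s → u ∈ G.new i →
      (u, w) ∈ edgesOf (G.new i) := by
    intro u w hact hus huN
    rcases hact with ⟨h, _⟩ | ⟨h, _⟩
    · exfalso
      have huO : u ∈ G.old i := (mem_of_mem_edgesOf h).1
      rcases hdisj u huO huN with rfl | rfl
      · exact hus rfl
      · exact not_out_last hOnd hOl h
    · exact h
  cases T with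
  | nil => simp at hTh
  | cons a T' =>
    obtain rfl : a = G.s := by simpa using hTh
    cases T' with
    | nil =>
      exfalso
      have hst : G.s = G.t := by simpa using hTl
      have hO' : G.old i = [G.s] :=
        eq_single hOnd hOh (by rw [hOl, hst])
      have hN' : G.new i = [G.s] :=
        eq_single hNnd hNh (by rw [hNl, hst])
      exact hne (hO'.trans hN'.symm)
    | cons v2 T'' =>
      have hfirst : G.active U i (G.s, v2) := (List.isChain_cons_cons.mp hTch).1
      have hTedges_sub : ∀ P : List V,
          (∀ u w, G.active U i (u, w) → u ≠ G.s → u ∈ P → (u, w) ∈ edgesOf P) →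
          (G.s, v2) ∈ edgesOf P →
          ∀ e ∈ edgesOf (G.s :: v2 :: T''), e ∈ edgesOf P := by
        intro P hgood hfe e he
        rw [edgesOf_cons_cons] at he
        rcases List.mem_cons.mp he with rfl | he
        · exact hfe
        · refine chain_in hgood (v2 :: T'') (List.isChain_cons_cons.mp hTch).2 ?_ ?_ e he
          · intro u hu h
            exact (List.nodup_cons.mp hTnd).1 (h ▸ hu)
          · intro x hx
            obtain rfl : v2 = x := by simpa using hx
            exact (mem_of_mem_edgesOf hfe).2
      have key : (G.s :: v2 :: T'' = G.old i) ∨ (G.s :: v2 :: T'' = G.new i) := by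
        rcases hfirst with ⟨hfe, _⟩ | ⟨hfe, _⟩
        · exact Or.inl (follow _ _ hOnd hTnd (by simp [hOh]) (by rw [hTl, hOl])
            (hTedges_sub _ hgoodO hfe))
        · exact Or.inr (follow _ _ hNnd hTnd (by simp [hNh]) (by rw [hTl, hNl])
            (hTedges_sub _ hgoodN hfe))
      refine ⟨key, ?_, ?_⟩
      · -- forward direction
        intro hTN
        constructor
        · rcases hfirst with ⟨hfe, hsU⟩ | ⟨_, hsU⟩
          · exfalso
            have hfeN : (G.s, v2) ∈ edgesOf (G.new i) := by
              rw [← hTN]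
              exact List.mem_cons_self
            have hv2O : v2 ∈ G.old i := (mem_of_mem_edgesOf hfe).2
            have hv2N : v2 ∈ G.new i := (mem_of_mem_edgesOf hfeN).2
            rcases hdisj v2 hv2O hv2N with rfl | rfl
            · exact (List.nodup_cons.mp hTnd).1 (List.mem_cons_self)
            · have hO' : G.old i = [G.s, G.t] := eq_pair hOnd hOh hOl hfe
              have hN' : G.new i = [G.s, G.t] := eq_pair hNnd hNh hNl hfeN
              exact hne (hO'.trans hN'.symm)
          · exact hsU
        · intro v hvN hvs hvt
          obtain ⟨w, hw⟩ := exists_out hNl hvN hvt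
          rw [← hTN] at hw
          have hact : G.active U i (v, w) := chain'_iff_edges.mp hTch (v, w) hw
          rcases hact with ⟨h, _⟩ | ⟨_, hU⟩
          · exfalso
            have hvO : v ∈ G.old i := (mem_of_mem_edgesOf h).1
            rcases hdisj v hvO hvN with rfl | rfl
            · exact hvs rfl
            · exact hvt rfl
          · exact hU
      · -- backward direction
        rintro ⟨hsU, hall⟩
        have hpath : UFN.IsPathIn (G.active U i) G.s G.t (G.new i) := by
          refine ⟨hNh, hNl, ?_, hNnd⟩
          rw [chain'_iff_edges]
          intro e he
          obtain ⟨u, w⟩ := e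
          right
          refine ⟨he, ?_⟩
          by_cases hs : u = G.s
          · rw [hs]; exact hsU
          · have huN : u ∈ G.new i := (mem_of_mem_edgesOf he).1
            have hvt : u ≠ G.t := fun h => not_out_last hNnd hNl (h ▸ he)
            exact hall u huN hs hvt
        exact (hTuniq (G.new i) hpath (hWF.2.2.1 i)).symm
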